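/- Let B be a category with finite products, T : B ⥤ B an endofunctor, and p : T ⟶ 𝟭_B a natural transformation. Let X, Y, Z be objects with trivializations t_X, t_Y, t_Z. For f : X ⟶ Y define δf := t_X.inv ≫ T f ≫ t_Y.hom ≫ π₁ : X ⨯ X ⟶ Y. Then: (i) t_X.inv ≫ T f ≫ t_Y.hom = ⟨f ∘ π₀, δf⟩ for every f : X ⟶ Y; (ii) δ(id_X) = π₁; (iii) δ(g ∘ f) = δg ∘ ⟨f ∘ π₀, δf⟩ for all f : X ⟶ Y and g : Y ⟶ Z. -/

import Mathlib

open CategoryTheory CategoryTheory.Limits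

universe v u

variable {B : Type u} [Category.{v} B] [HasFiniteProducts B]

/-- A trivialization of an object `X` with respect to an endofunctor `T` equipped with a
natural transformation `p : T ⟶ 𝟭 B`: an isomorphism `T X ≅ X ⨯ X` whose first component
is `p_X`. -/
structure Triv (T : B ⥤ B) (p : T ⟶ 𝟭 B) (X : B) where
  iso : T.obj X ≅ X ⨯ X
  hom_fst : iso.hom ≫ prod.fst = p.app X

/-- The differential combinator induced on trivialized objects:
`δf := t_X.inv ≫ T f ≫ t_Y.hom ≫ π₁`. -/
noncomputable def deltaMap {T : B ⥤ B} {p : T ⟶ 𝟭 B} {X Y : B}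
    (tX : Triv T p X) (tY : Triv T p Y) (f : X ⟶ Y) : X ⨯ X ⟶ Y :=
  tX.iso.inv ≫ T.map f ≫ tY.iso.hom ≫ prod.snd

/-- (i) the conjugated map of `T f` is `⟨f ∘ π₀, δf⟩`; (ii) `δ(id) = π₁`;
(iii) the chain rule `δ(g ∘ f) = δg ∘ ⟨f ∘ π₀, δf⟩`. -/
theorem deltaMap_props {T : B ⥤ B} {p : T ⟶ 𝟭 B} {X Y Z : B}
    (tX : Triv T p X) (tY : Triv T p Y) (tZ : Triv T p Z) :
    (∀ f : X ⟶ Y,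
      tX.iso.inv ≫ T.map f ≫ tY.iso.hom = prod.lift (prod.fst ≫ f) (deltaMap tX tY f)) ∧
    (deltaMap tX tX (𝟙 X) = prod.snd) ∧
    (∀ (f : X ⟶ Y) (g : Y ⟶ Z),
      deltaMap tX tZ (f ≫ g) =
        prod.lift (prod.fst ≫ f) (deltaMap tX tY f) ≫ deltaMap tY tZ g) := by
  have hi : ∀ f : X ⟶ Y,
      tX.iso.inv ≫ T.map f ≫ tY.iso.hom = prod.lift (prod.fst ≫ f) (deltaMap tX tY f) := by
    intro f
    apply Limits.prod.hom_ext
    · simp only [Category.assoc, tY.hom_fst, prod.lift_fst]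
      have := p.naturality f
      simp only [Functor.id_map] at this
      rw [this, ← tX.hom_fst]
      simp
    · simp [deltaMap]
      exact (prod.lift_snd _ _).symm
  refine ⟨hi, ?_, ?_⟩
  · simp [deltaMap]
  · intro f g
    have key : tX.iso.inv ≫ T.map (f ≫ g) ≫ tZ.iso.hom =
        prod.lift (prod.fst ≫ f) (deltaMap tX tY f) ≫ tY.iso.inv ≫ T.map g ≫ tZ.iso.hom := by
      rw [← hi f]
      simp [Functor.map_comp]
    simp only [deltaMap, ← Category.assoc]
    rw [← Category.assoc] at key
    rw [key]
    simp only [deltaMap, Category.assoc]
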